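/- arXiv:1604.02169 — 2 statements merged into one kernel-verified Lean document; each statement's English description precedes it below -/
import Mathlib

section
/- Let 0 < α ≤ 1, h > 0, and let f₊, f₋ : ℝ → ℝ be functions that are nonnegative on [0,∞). Suppose the sequence (x_n)_{n≥0} satisfies x_0 ≥ 0 and for all n ≥ 1 the implicit recursion x_n (1 + h^α f₋(x_{n-1})) = h^α f₊(x_{n-1}) + x_0 ∑_{k=0}^{n-1} α_k^{[α]} − ∑_{k=1}^{n-1} α_k^{[α]} x_{n-k}. Then x_n ≥ 0 for all n ≥ 0, unconditionally in h. -/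
noncomputable def glCoef (α : ℝ) (k : ℕ) : ℝ :=
  ∏ j ∈ Finset.range k, ((j : ℝ) - α) / ((j : ℝ) + 1)

noncomputable def glT (α : ℝ) (n : ℕ) : ℝ :=
  ∏ j ∈ Finset.range n, ((j : ℝ) + 1 - α) / ((j : ℝ) + 1)

lemma glT_nonneg (α : ℝ) (hα1 : α ≤ 1) (n : ℕ) : 0 ≤ glT α n := by
  apply Finset.prod_nonneg
  intro j _
  apply div_nonneg
  · have : (0:ℝ) ≤ (j:ℝ) := Nat.cast_nonneg j
    linarith
  · positivity

lemma glCoef_succ_eq (α : ℝ) (n : ℕ) :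
    glCoef α (n+1) = -α/((n:ℝ)+1) * glT α n := by
  induction n with
  | zero => simp [glCoef, glT]
  | succ n ih =>
    have h1 : glCoef α (n+2) = glCoef α (n+1) * ((((n:ℝ)+1) - α)/((n:ℝ)+2)) := by
      rw [glCoef, Finset.prod_range_succ, ← glCoef]; push_cast; ring
    have h2 : glT α (n+1) = glT α n * ((((n:ℝ)+1) - α)/((n:ℝ)+1)) := by
      rw [glT, Finset.prod_range_succ, ← glT]
    have hn1 : ((n:ℝ)+1) ≠ 0 := by positivity
    have hn2 : ((n:ℝ)+2) ≠ 0 := by positivity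
    rw [h1, ih, h2]
    push_cast
    field_simp
    ring

lemma glCoef_nonpos (α : ℝ) (hα0 : 0 < α) (hα1 : α ≤ 1) {k : ℕ} (hk : 1 ≤ k) :
    glCoef α k ≤ 0 := by
  obtain ⟨n, rfl⟩ := Nat.exists_eq_add_of_le hk
  rw [add_comm, glCoef_succ_eq]
  apply mul_nonpos_of_nonpos_of_nonneg
  · apply div_nonpos_of_nonpos_of_nonneg
    · linarith
    · positivity
  · exact glT_nonneg α hα1 n

lemma sum_glCoef (α : ℝ) (n : ℕ) :
    ∑ k ∈ Finset.range (n+1), glCoef α k = glT α n := by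
  induction n with
  | zero => simp [glCoef, glT]
  | succ n ih =>
    have h2 : glT α (n+1) = glT α n * ((((n:ℝ)+1) - α)/((n:ℝ)+1)) := by
      rw [glT, Finset.prod_range_succ, ← glT]
    rw [Finset.sum_range_succ, ih, glCoef_succ_eq, h2]
    have hn1 : ((n:ℝ)+1) ≠ 0 := by positivity
    field_simp
    ring

lemma sum_glCoef_nonneg (α : ℝ) (hα1 : α ≤ 1) (n : ℕ) :
    0 ≤ ∑ k ∈ Finset.range n, glCoef α k := by
  cases n with
  | zero => simp
  | succ n => rw [sum_glCoef]; exact glT_nonneg α hα1 n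

/-- Unconditional positivity of the NSFD scheme for `D^α x = f₊(x) - x f₋(x)`. -/
theorem nsfd_positivity (α h : ℝ) (hα0 : 0 < α) (hα1 : α ≤ 1) (hh : 0 < h)
    (fp fm : ℝ → ℝ) (hfp : ∀ z, 0 ≤ z → 0 ≤ fp z) (hfm : ∀ z, 0 ≤ z → 0 ≤ fm z)
    (x : ℕ → ℝ) (hx0 : 0 ≤ x 0)
    (hrec : ∀ n : ℕ, 1 ≤ n →
      x n * (1 + h ^ α * fm (x (n - 1))) =
        h ^ α * fp (x (n - 1)) + x 0 * (∑ k ∈ Finset.range n, glCoef α k)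
          - ∑ k ∈ Finset.Icc 1 (n - 1), glCoef α k * x (n - k)) :
    ∀ n, 0 ≤ x n := by
  have hha : 0 < h ^ α := Real.rpow_pos_of_pos hh α
  intro n
  induction n using Nat.strong_induction_on with
  | _ n ih =>
    match n with
    | 0 => exact hx0
    | Nat.succ m =>
      have hxm : 0 ≤ x m := ih m (Nat.lt_succ_self m)
      have heq := hrec (m+1) (Nat.le_add_left 1 m)
      simp only [Nat.add_sub_cancel] at heq
      have hpos : 0 < 1 + h ^ α * fm (x m) := by
        have := hfm (x m) hxm
        nlinarith
      have hrhs : 0 ≤ h ^ α * fp (x m) + x 0 * (∑ k ∈ Finset.range (m+1), glCoef α k)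
          - ∑ k ∈ Finset.Icc 1 m, glCoef α k * x (m+1 - k) := by
        have h1 : 0 ≤ h ^ α * fp (x m) := mul_nonneg hha.le (hfp (x m) hxm)
        have h2 : 0 ≤ x 0 * (∑ k ∈ Finset.range (m+1), glCoef α k) :=
          mul_nonneg hx0 (sum_glCoef_nonneg α hα1 (m+1))
        have h3 : ∑ k ∈ Finset.Icc 1 m, glCoef α k * x (m+1 - k) ≤ 0 := by
          apply Finset.sum_nonpos
          intro k hk
          rw [Finset.mem_Icc] at hk
          have hxk : 0 ≤ x (m+1-k) := by
            apply ih
            omega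
          exact mul_nonpos_of_nonpos_of_nonneg (glCoef_nonpos α hα0 hα1 hk.1) hxk
        linarith
      show 0 ≤ x (m+1)
      nlinarith [heq, hrhs, hpos, mul_pos hpos hpos]
end

section
/- Let f : ℝ^m → ℝ^m be C¹ and satisfy the positivity condition (P)₁: for each i, f_i(x) ≥ 0 whenever x ∈ ℝ₊^m and x_i = 0. Then for each i there exist functions f_{+,i}, f_{-,i} : ℝ^m → ℝ, nonnegative on ℝ₊^m and locally Lipschitz, such that f_i(x) = f_{+,i}(x) − x_i f_{-,i}(x) for all x. -/
open Metric Set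

/-- Product of locally Lipschitz real-valued functions is locally Lipschitz. -/
lemma locallyLipschitz_mul_real {α : Type*} [PseudoMetricSpace α] {f g : α → ℝ}
    (hf : LocallyLipschitz f) (hg : LocallyLipschitz g) :
    LocallyLipschitz (fun x => f x * g x) := by
  intro x₀
  obtain ⟨Kf, t, ht, hKf⟩ := hf x₀
  obtain ⟨Kg, u, hu, hKg⟩ := hg x₀
  set A : ℝ := |f x₀| + 1 with hA
  set B : ℝ := |g x₀| + 1 with hB
  have hA1 : (1:ℝ) ≤ A := by rw [hA]; linarith [abs_nonneg (f x₀)]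
  have hB1 : (1:ℝ) ≤ B := by rw [hB]; linarith [abs_nonneg (g x₀)]
  have hfa : ∀ᶠ x in nhds x₀, |f x| ≤ A := by
    have h2 : ∀ᶠ x in nhds x₀, dist (f x) (f x₀) < 1 :=
      Metric.tendsto_nhds.mp (hf.continuous.tendsto x₀) 1 one_pos
    filter_upwards [h2] with x hx
    have : |f x - f x₀| < 1 := by simpa [Real.dist_eq] using hx
    calc |f x| = |f x - f x₀ + f x₀| := by ring_nf
    _ ≤ |f x - f x₀| + |f x₀| := abs_add_le _ _
    _ ≤ A := by simp [hA]; linarith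
  have hga : ∀ᶠ x in nhds x₀, |g x| ≤ B := by
    have h2 : ∀ᶠ x in nhds x₀, dist (g x) (g x₀) < 1 :=
      Metric.tendsto_nhds.mp (hg.continuous.tendsto x₀) 1 one_pos
    filter_upwards [h2] with x hx
    have : |g x - g x₀| < 1 := by simpa [Real.dist_eq] using hx
    calc |g x| = |g x - g x₀ + g x₀| := by ring_nf
    _ ≤ |g x - g x₀| + |g x₀| := abs_add_le _ _
    _ ≤ B := by simp [hB]; linarith
  refine ⟨(A * Kg + B * Kf).toNNReal, t ∩ u ∩ {x | |f x| ≤ A} ∩ {x | |g x| ≤ B}, ?_, ?_⟩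
  · exact Filter.inter_mem (Filter.inter_mem (Filter.inter_mem ht hu) hfa) hga
  · apply LipschitzOnWith.of_dist_le_mul
    rintro x ⟨⟨⟨hxt, hxu⟩, hxf⟩, hxg⟩ y ⟨⟨⟨hyt, hyu⟩, hyf⟩, hyg⟩
    have h1 : dist (f x) (f y) ≤ Kf * dist x y := hKf.dist_le_mul x hxt y hyt
    have h2 : dist (g x) (g y) ≤ Kg * dist x y := hKg.dist_le_mul x hxu y hyu
    have hcoe : ((A * Kg + B * Kf).toNNReal : ℝ) = A * Kg + B * Kf := by
      apply Real.coe_toNNReal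
      positivity
    rw [hcoe]
    have key : |f x * g x - f y * g y| ≤ |f x| * |g x - g y| + |g y| * |f x - f y| := by
      have : f x * g x - f y * g y = f x * (g x - g y) + g y * (f x - f y) := by ring
      rw [this]
      calc |f x * (g x - g y) + g y * (f x - f y)|
          ≤ |f x * (g x - g y)| + |g y * (f x - f y)| := abs_add_le _ _
        _ = |f x| * |g x - g y| + |g y| * |f x - f y| := by rw [abs_mul, abs_mul]
    rw [Real.dist_eq]
    have d1 : |f x - f y| ≤ Kf * dist x y := by rwa [Real.dist_eq] at h1
    have d2 : |g x - g y| ≤ Kg * dist x y := by rwa [Real.dist_eq] at h2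
    have hAn : (0:ℝ) ≤ |f x| := abs_nonneg _
    have hBn : (0:ℝ) ≤ |g y| := abs_nonneg _
    calc |f x * g x - f y * g y| ≤ |f x| * |g x - g y| + |g y| * |f x - f y| := key
      _ ≤ A * (Kg * dist x y) + B * (Kf * dist x y) := by
          apply add_le_add
          · exact mul_le_mul hxf d2 (abs_nonneg _) (by linarith)
          · exact mul_le_mul hyg d1 (abs_nonneg _) (by linarith)
      _ = (A * Kg + B * Kf) * dist x y := by ring

/-- Representation theorem: a `C¹` vector field satisfying the positivity condition `(P)₁`
decomposes as `f_i(x) = f_{+,i}(x) - x_i f_{-,i}(x)` with `f_±` nonnegative on the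
nonnegative orthant and locally Lipschitz. -/
theorem representation_theorem (m : ℕ) (f : (Fin m → ℝ) → (Fin m → ℝ))
    (hf : ContDiff ℝ 1 f)
    (hP : ∀ i : Fin m, ∀ x : Fin m → ℝ, (∀ j, 0 ≤ x j) → x i = 0 → 0 ≤ f x i) :
    ∀ i : Fin m, ∃ fp fm : (Fin m → ℝ) → ℝ,
      LocallyLipschitz fp ∧ LocallyLipschitz fm ∧
      (∀ x : Fin m → ℝ, (∀ j, 0 ≤ x j) → 0 ≤ fp x ∧ 0 ≤ fm x) ∧
      (∀ x : Fin m → ℝ, f x i = fp x - x i * fm x) := by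
  intro i
  classical
  set n : (Fin m → ℝ) → ℝ := fun y => ‖fderiv ℝ f y‖ with hn
  set M : ℝ → ℝ :=
    fun s => sSup (n '' Metric.closedBall (0 : Fin m → ℝ) (max s 0 + 1)) with hMdef
  have hcont : Continuous n := (hf.continuous_fderiv one_ne_zero).norm
  have hne : ∀ s : ℝ, (n '' Metric.closedBall (0 : Fin m → ℝ) (max s 0 + 1)).Nonempty := by
    intro s
    refine ⟨n 0, ⟨0, ?_, rfl⟩⟩
    simp only [Metric.mem_closedBall, dist_self]
    positivity
  have hbdd : ∀ s : ℝ, BddAbove (n '' Metric.closedBall (0 : Fin m → ℝ) (max s 0 + 1)) :=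
    fun s => ((isCompact_closedBall _ _).image hcont).bddAbove
  have hMle : ∀ (s : ℝ) (y : Fin m → ℝ), ‖y‖ ≤ max s 0 + 1 → n y ≤ M s := by
    intro s y hy
    exact le_csSup (hbdd s) ⟨y, by simpa [Metric.mem_closedBall, dist_zero_right] using hy, rfl⟩
  have hM0 : ∀ s, 0 ≤ M s := by
    intro s
    refine le_trans (norm_nonneg (fderiv ℝ f 0)) (hMle s 0 ?_)
    simp only [norm_zero]
    positivity
  have hMmono : Monotone M := by
    intro s t hst
    refine csSup_le_csSup (hbdd t) (hne s) (Set.image_mono ?_)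
    refine Metric.closedBall_subset_closedBall ?_
    have := max_le_max hst (le_refl (0:ℝ))
    linarith
  have hMint : ∀ a b : ℝ, IntervalIntegrable M MeasureTheory.volume a b :=
    fun a b => hMmono.intervalIntegrable
  set F : ℝ → ℝ := fun a => ∫ s in a..(a + 1), M s with hFdef
  have hF0 : ∀ a, 0 ≤ F a := by
    intro a
    exact intervalIntegral.integral_nonneg (by linarith) (fun u _ => hM0 u)
  have hFge : ∀ a, M a ≤ F a := by
    intro a
    have h1 : (∫ _s in a..(a + 1), M a) ≤ ∫ s in a..(a + 1), M s := by
      apply intervalIntegral.integral_mono_on (by linarith)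
        intervalIntegrable_const (hMint _ _)
      intro x hx
      exact hMmono hx.1
    simpa using h1
  -- bound on integrals over [a,b]
  have hIbd : ∀ a b : ℝ, a ≤ b → (0 ≤ ∫ s in a..b, M s) ∧
      (∫ s in a..b, M s) ≤ M b * (b - a) := by
    intro a b hab
    constructor
    · exact intervalIntegral.integral_nonneg hab (fun u _ => hM0 u)
    · have h1 : (∫ s in a..b, M s) ≤ ∫ _s in a..b, M b := by
        apply intervalIntegral.integral_mono_on hab (hMint _ _) intervalIntegrable_const
        intro x hx
        exact hMmono hx.2
      simpa [mul_comm] using h1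
  have hFdiff : ∀ a b : ℝ, a ≤ b → |F b - F a| ≤ M (b + 1) * (b - a) := by
    intro a b hab
    have e1 : (∫ s in a..b, M s) + ∫ s in b..(b + 1), M s = ∫ s in a..(b + 1), M s :=
      intervalIntegral.integral_add_adjacent_intervals (hMint _ _) (hMint _ _)
    have e2 : (∫ s in a..(a + 1), M s) + ∫ s in (a + 1)..(b + 1), M s
        = ∫ s in a..(b + 1), M s :=
      intervalIntegral.integral_add_adjacent_intervals (hMint _ _) (hMint _ _)
    have key : F b - F a = (∫ s in (a + 1)..(b + 1), M s) - ∫ s in a..b, M s := by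
      simp only [hFdef]
      linarith [e1, e2]
    obtain ⟨hl1, hu1⟩ := hIbd a b hab
    obtain ⟨hl2, hu2⟩ := hIbd (a + 1) (b + 1) (by linarith)
    have hu1' : (∫ s in a..b, M s) ≤ M (b + 1) * (b - a) := by
      refine le_trans hu1 (mul_le_mul_of_nonneg_right (hMmono (by linarith)) (by linarith))
    have hu2' : (∫ s in (a + 1)..(b + 1), M s) ≤ M (b + 1) * (b - a) := by
      have h3 : ((b:ℝ) + 1) - (a + 1) = b - a := by ring
      rw [h3] at hu2
      exact hu2
    rw [key, abs_le]
    constructor <;> linarith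
  -- fm is locally Lipschitz
  have hfm_lip : LocallyLipschitz (fun x : Fin m → ℝ => F ‖x‖) := by
    intro x₀
    set R : ℝ := ‖x₀‖ + 2 with hR
    refine ⟨(M (R + 1)).toNNReal, Metric.ball x₀ 1, Metric.ball_mem_nhds _ one_pos, ?_⟩
    apply LipschitzOnWith.of_dist_le_mul
    intro x hx y hy
    have hxR : ‖x‖ ≤ R := by
      have hd : ‖x - x₀‖ < 1 := by
        rw [← dist_eq_norm]; exact Metric.mem_ball.mp hx
      have h2 : ‖x‖ ≤ ‖x₀‖ + ‖x - x₀‖ := by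
        calc ‖x‖ = ‖x₀ + (x - x₀)‖ := by ring_nf
          _ ≤ ‖x₀‖ + ‖x - x₀‖ := norm_add_le _ _
      linarith
    have hyR : ‖y‖ ≤ R := by
      have hd : ‖y - x₀‖ < 1 := by
        rw [← dist_eq_norm]; exact Metric.mem_ball.mp hy
      have h2 : ‖y‖ ≤ ‖x₀‖ + ‖y - x₀‖ := by
        calc ‖y‖ = ‖x₀ + (y - x₀)‖ := by ring_nf
          _ ≤ ‖x₀‖ + ‖y - x₀‖ := norm_add_le _ _
      linarith
    have hcoe : ((M (R + 1)).toNNReal : ℝ) = M (R + 1) := Real.coe_toNNReal _ (hM0 _)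
    rw [hcoe, Real.dist_eq]
    have hnn : |‖x‖ - ‖y‖| ≤ dist x y := by
      rw [dist_eq_norm]; exact abs_norm_sub_norm_le x y
    have main : ∀ a b : ℝ, a ≤ b → b ≤ R → |F a - F b| ≤ M (R + 1) * |a - b| := by
      intro a b hab hbR
      have h1 := hFdiff a b hab
      have h2 : M (b + 1) ≤ M (R + 1) := hMmono (by linarith)
      have h3 : |F a - F b| = |F b - F a| := abs_sub_comm _ _
      have h4 : |a - b| = b - a := by rw [abs_sub_comm]; exact abs_of_nonneg (by linarith)
      rw [h3, h4]
      calc |F b - F a| ≤ M (b + 1) * (b - a) := h1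
        _ ≤ M (R + 1) * (b - a) := mul_le_mul_of_nonneg_right h2 (by linarith)
    have hMR1 : 0 ≤ M (R + 1) := hM0 _
    rcases le_total ‖x‖ ‖y‖ with h | h
    · calc |F ‖x‖ - F ‖y‖| ≤ M (R + 1) * |‖x‖ - ‖y‖| := main _ _ h hyR
        _ ≤ M (R + 1) * dist x y := mul_le_mul_of_nonneg_left hnn hMR1
    · calc |F ‖x‖ - F ‖y‖| = |F ‖y‖ - F ‖x‖| := abs_sub_comm _ _
        _ ≤ M (R + 1) * |‖y‖ - ‖x‖| := main _ _ h hxR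
        _ = M (R + 1) * |‖x‖ - ‖y‖| := by rw [abs_sub_comm]
        _ ≤ M (R + 1) * dist x y := mul_le_mul_of_nonneg_left hnn hMR1
  -- the component functions are locally Lipschitz
  have hproj : LocallyLipschitz (fun x : Fin m → ℝ => x i) :=
    (LipschitzWith.eval i).locallyLipschitz
  have hfi : LocallyLipschitz (fun x : Fin m → ℝ => f x i) :=
    (LipschitzWith.eval i).locallyLipschitz.comp hf.locallyLipschitz
  -- key estimate on the orthant
  have hkey : ∀ x : Fin m → ℝ, (∀ j, 0 ≤ x j) → -(M ‖x‖ * x i) ≤ f x i := by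
    intro x hx
    set x' : Fin m → ℝ := Function.update x i 0 with hx'
    have hx'nonneg : ∀ j, 0 ≤ x' j := by
      intro j
      by_cases hj : j = i
      · subst hj; simp [hx']
      · simp only [hx', Function.update_of_ne hj]; exact hx j
    have hx'i : x' i = 0 := by simp [hx']
    have hfx' : 0 ≤ f x' i := hP i x' hx'nonneg hx'i
    have hx'norm : ‖x'‖ ≤ ‖x‖ := by
      apply (pi_norm_le_iff_of_nonneg (norm_nonneg x)).mpr
      intro j
      by_cases hj : j = i
      · subst hj; simp [hx']
      · simp only [hx', Function.update_of_ne hj]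
        exact norm_le_pi_norm x j
    have hsub : x - x' = Pi.single i (x i) := by
      funext j
      by_cases hj : j = i
      · subst hj; simp [hx']
      · simp [hx', Function.update_of_ne hj, Pi.single_apply, hj]
    have hnormsub : ‖x - x'‖ = |x i| := by
      rw [hsub, Pi.norm_single, Real.norm_eq_abs]
    set s : Set (Fin m → ℝ) := Metric.closedBall 0 (max ‖x‖ 0 + 1) with hs
    have hconv : Convex ℝ s := convex_closedBall _ _
    have hxs : x ∈ s := by
      simp only [hs, Metric.mem_closedBall, dist_zero_right]
      have := le_max_left ‖x‖ (0:ℝ); linarith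
    have hx's : x' ∈ s := by
      simp only [hs, Metric.mem_closedBall, dist_zero_right]
      have := le_max_left ‖x‖ (0:ℝ); linarith
    have hbound : ‖f x - f x'‖ ≤ M ‖x‖ * ‖x - x'‖ := by
      apply hconv.norm_image_sub_le_of_norm_fderiv_le
        (fun y _ => (hf.differentiable one_ne_zero).differentiableAt)
        (fun y hy => hMle ‖x‖ y (by
          rw [hs] at hy
          simpa [Metric.mem_closedBall, dist_zero_right] using hy)) hx's hxs
    have hcomp : |f x i - f x' i| ≤ ‖f x - f x'‖ := by
      have h5 := norm_le_pi_norm (f x - f x') i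
      simpa [Real.norm_eq_abs] using h5
    have habs : |x i| = x i := abs_of_nonneg (hx i)
    have h2 : ‖f x - f x'‖ ≤ M ‖x‖ * x i := by
      rw [hnormsub, habs] at hbound; exact hbound
    have h6 := abs_le.mp hcomp
    linarith [h6.1, h6.2]
  -- assemble
  refine ⟨fun x => f x i + x i * F ‖x‖, fun x => F ‖x‖, ?_, hfm_lip, ?_, ?_⟩
  · exact hfi.add (locallyLipschitz_mul_real hproj hfm_lip)
  · intro x hx
    refine ⟨?_, hF0 _⟩
    have h1 := hkey x hx
    have h2 : M ‖x‖ * x i ≤ F ‖x‖ * x i :=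
      mul_le_mul_of_nonneg_right (hFge _) (hx i)
    show 0 ≤ f x i + x i * F ‖x‖
    have h3 : x i * F ‖x‖ = F ‖x‖ * x i := mul_comm _ _
    linarith
  · intro x
    ring
end
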